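/- Let t ≥ 2 and n ≥ 1 be integers, let ω ∈ ℂ be a primitive t-th root of unity, and let λ be a partition of length at most tn with n_q(λ,tn) = n for every 0 ≤ q ≤ t−1 (equivalently, the t-core of λ is empty). Let x_1,…,x_n ∈ ℂ be nonzero with x_1^t,…,x_n^t pairwise distinct. Then s_λ(X, ωX, …, ω^{t−1}X) = (−1)^{(t(t−1)/2)·(n(n+1)/2)} · sgn(σ_λ) · ∏_{q=0}^{t−1} s_{λ^{(q)}}(x_1^t,…,x_n^t), where the left-hand side is the Schur polynomial of λ evaluated at the tn pairwise distinct nonzero numbers ω^p x_i (0 ≤ p ≤ t−1, 1 ≤ i ≤ n). -/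

import Mathlib

open BigOperators

/-- The beta set of a partition `lam` of length at most `m`:
`β_j(λ) = λ_j + m - j` (0-indexed: `β j = λ j + (m - 1 - j)`). -/
def betaSet (m : ℕ) (lam : Fin m → ℕ) (j : Fin m) : ℕ :=
  lam j + (m - 1 - (j : ℕ))

/-- `n_i(λ, m)`: the number of entries of the beta set congruent to `i` mod `t`. -/
def ncount (t m : ℕ) (lam : Fin m → ℕ) (i : ℕ) : ℕ :=
  (Finset.univ.filter fun j : Fin m => betaSet m lam j % t = i).card

/-- The Schur polynomial of a partition `mu` of length at most `N`, evaluated at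
complex numbers `y`. -/
noncomputable def schur (N : ℕ) (mu : Fin N → ℕ) (y : Fin N → ℂ) : ℂ :=
  Matrix.det (Matrix.of fun i j : Fin N => y i ^ betaSet N mu j) /
    Matrix.det (Matrix.of fun i j : Fin N => y i ^ (N - 1 - (j : ℕ)))

/-- The entries of the beta set congruent to `q` mod `t`, sorted increasingly. -/
def qList (t m : ℕ) (lam : Fin m → ℕ) (q : ℕ) : List ℕ :=
  Finset.sort
    ((Finset.univ.filter fun j : Fin m => betaSet m lam j % t = q).image (betaSet m lam)) (· ≤ ·)

/-- The `q`-th quotient partition of `λ` (0-indexed part `j`):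
`λ^{(q)}_{j+1} = (β^{(q)}_{j+1} - q)/t - (n_q - 1 - j)`, where
`β^{(q)}_1 > β^{(q)}_2 > ⋯` are the beta numbers congruent to `q` mod `t`. -/
def quotPart (t m : ℕ) (lam : Fin m → ℕ) (q : ℕ) (j : ℕ) : ℕ :=
  ((qList t m lam q).getD (ncount t m lam q - 1 - j) 0 - q) / t
    - (ncount t m lam q - 1 - j)

/-- `N(λ)`: the number of pairs `j < k` with `(β_j mod t) > (β_k mod t)`;
`sgn σ_λ = (-1)^{N(λ)}`. -/
def invCount (t m : ℕ) (lam : Fin m → ℕ) : ℕ :=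
  (Finset.univ.filter fun jk : Fin m × Fin m =>
    jk.1 < jk.2 ∧ betaSet m lam jk.2 % t < betaSet m lam jk.1 % t).card


section Helpers
open Finset Equiv

lemma prod_pairs_eq {N : ℕ} {M : Type*} [CommMonoid M] (h : Fin N → Fin N → M) :
    ∏ p ∈ univ.filter (fun p : Fin N × Fin N => p.1 < p.2), h p.1 p.2
      = ∏ i : Fin N, ∏ j ∈ Finset.Ioi i, h i j := by
  rw [← Finset.prod_sigma univ (fun i => Finset.Ioi i) (fun p => h p.1 p.2)]
  apply Finset.prod_nbij (fun p => ⟨p.1, p.2⟩)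
  · intro p hp; simp_all [Finset.mem_sigma]
  · intro p hp q hq hpq; cases p; cases q; simpa [Prod.ext_iff] using hpq
  · intro p hp; exact ⟨(p.1, p.2), by simp_all [Finset.mem_sigma], rfl⟩
  · intro p hp; rfl

lemma card_pairs_eq {N : ℕ} (c : Fin N → Fin N → Prop) [DecidablePred fun p : Fin N × Fin N => c p.1 p.2] [∀ i, DecidablePred (c i)] :
    (univ.filter fun p : Fin N × Fin N => p.1 < p.2 ∧ c p.1 p.2).card
      = ∑ i : Fin N, ((Finset.Ioi i).filter (c i)).card := by
  classical
  rw [← Finset.card_sigma]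
  apply Finset.card_nbij (fun p => ⟨p.1, p.2⟩)
  · intro p hp; simp_all [Finset.mem_sigma]
  · intro p hp q hq hpq; cases p; cases q; simpa [Prod.ext_iff] using hpq
  · intro p hp; exact ⟨(p.1, p.2), by simp_all [Finset.mem_sigma], rfl⟩

lemma sign_eq_inversions {N : ℕ} (f : Equiv.Perm (Fin N)) :
    (Equiv.Perm.sign f : ℤ) =
      (-1) ^ (univ.filter fun p : Fin N × Fin N => p.1 < p.2 ∧ f p.2 < f p.1).card := by
  classical
  have key : ∏ i : Fin N, ∏ j ∈ Finset.Ioi i, ((f j : ℤ) - (f i : ℤ))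
      = (Equiv.Perm.sign f : ℤ) * ∏ i : Fin N, ∏ j ∈ Finset.Ioi i, ((j:ℤ) - (i:ℤ)) := by
    have h1 := Matrix.det_permute f (Matrix.vandermonde (fun i : Fin N => (i : ℤ)))
    rw [Matrix.det_vandermonde] at h1
    have h2 : ((Matrix.vandermonde fun i : Fin N => (i : ℤ)).submatrix (⇑f) id)
        = Matrix.vandermonde (fun i : Fin N => (f i : ℤ)) := by
      ext i j; simp [Matrix.vandermonde]
    rw [h2, Matrix.det_vandermonde] at h1
    exact_mod_cast h1
  set s : Finset (Fin N × Fin N) := univ.filter (fun p : Fin N × Fin N => p.1 < p.2) with hs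
  have hmem : ∀ p : Fin N × Fin N, p ∈ s ↔ p.1 < p.2 := by intro p; simp [hs]
  set φ : Fin N × Fin N → Fin N × Fin N :=
    fun p => if f p.1 < f p.2 then (f p.1, f p.2) else (f p.2, f p.1) with hφ
  have hne : ∀ p ∈ s, f p.1 ≠ f p.2 := fun p hp h =>
    ((hmem p).mp hp).ne (f.injective h)
  have hφmem : ∀ p ∈ s, φ p ∈ s := by
    intro p hp
    have h2 := hne p hp
    rw [hmem]
    simp only [hφ]
    split_ifs with h
    · exact h
    · exact (not_lt.mp h).lt_of_ne fun hh => h2 hh.symm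
  have hprod : ∏ p ∈ s, ((f p.2 : ℤ) - (f p.1 : ℤ))
      = (-1) ^ (s.filter fun p => f p.2 < f p.1).card
        * ∏ p ∈ s, (((φ p).2 : ℤ) - ((φ p).1 : ℤ)) := by
    have : ∀ p ∈ s, ((f p.2 : ℤ) - (f p.1 : ℤ))
        = (if f p.2 < f p.1 then (-1:ℤ) else 1) * (((φ p).2 : ℤ) - ((φ p).1 : ℤ)) := by
      intro p hp
      have h2 := hne p hp
      by_cases h : f p.1 < f p.2
      · have : ¬ f p.2 < f p.1 := asymm h
        simp only [hφ, h, if_true, if_false, this]; ring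
      · have h' : f p.2 < f p.1 := lt_of_le_of_ne (not_lt.mp h) (Ne.symm h2)
        simp only [hφ, h, h', if_true, if_false]; ring
    rw [Finset.prod_congr rfl this, Finset.prod_mul_distrib, Finset.prod_ite, Finset.prod_const,
      Finset.prod_const, one_pow, mul_one]
  have hφbij : ∏ p ∈ s, (((φ p).2 : ℤ) - ((φ p).1 : ℤ)) = ∏ p ∈ s, ((p.2 : ℤ) - (p.1 : ℤ)) := by
    apply Finset.prod_nbij φ hφmem
    · intro p hp q hq hpq
      have hp' := (hmem p).mp hp
      have hq' := (hmem q).mp hq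
      have : (f p.1 = f q.1 ∧ f p.2 = f q.2) ∨ (f p.1 = f q.2 ∧ f p.2 = f q.1) := by
        simp only [hφ] at hpq
        split_ifs at hpq with h1 h2 h2 <;>
          simp only [Prod.mk.injEq] at hpq <;> tauto
      rcases this with ⟨e1, e2⟩ | ⟨e1, e2⟩
      · exact Prod.ext (f.injective e1) (f.injective e2)
      · have e1' := f.injective e1
        have e2' := f.injective e2
        rw [e1', e2'] at hp'
        exact absurd hq' (asymm hp')
    · intro q hq
      simp only [Finset.mem_coe] at hq ⊢
      have hq' := (hmem q).mp hq
      refine ⟨if f.symm q.1 < f.symm q.2 then (f.symm q.1, f.symm q.2) else (f.symm q.2, f.symm q.1), ?_, ?_⟩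
      · rw [Finset.mem_coe, hmem]
        split_ifs with h
        · exact h
        · refine (not_lt.mp h).lt_of_ne fun hh => hq'.ne ?_
          have := congrArg f hh.symm
          simpa using this
      · by_cases h : f.symm q.1 < f.symm q.2 <;>
          simp only [hφ, h, if_true, if_false, Equiv.apply_symm_apply]
        · rw [if_pos hq']
        · rw [if_neg (asymm hq')]
    · intro p hp; rfl
  have hinv : (univ.filter fun p : Fin N × Fin N => p.1 < p.2 ∧ f p.2 < f p.1)
      = s.filter fun p => f p.2 < f p.1 := by
    rw [hs, Finset.filter_filter]
  rw [hinv]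
  rw [← prod_pairs_eq (fun i j => ((f j : ℤ) - (f i : ℤ))), ← hs] at key
  rw [hprod, hφbij] at key
  have hP : ∏ p ∈ s, ((p.2 : ℤ) - (p.1 : ℤ)) = ∏ i : Fin N, ∏ j ∈ Finset.Ioi i, ((j:ℤ) - (i:ℤ)) := by
    rw [hs]; exact prod_pairs_eq (fun i j => ((j:ℤ) - (i:ℤ)))
  rw [hP] at key
  have hPne : (∏ i : Fin N, ∏ j ∈ Finset.Ioi i, ((j:ℤ) - (i:ℤ))) ≠ 0 := by
    apply Finset.prod_ne_zero_iff.mpr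
    intro i _
    apply Finset.prod_ne_zero_iff.mpr
    intro j hj
    have h2 : i < j := Finset.mem_Ioi.mp hj
    have h2' : (i : ℕ) < (j : ℕ) := h2
    have h3 : ((i:ℕ):ℤ) < ((j:ℕ):ℤ) := by exact_mod_cast h2' 
    exact sub_ne_zero.mpr (ne_of_gt h3)
  exact mul_right_cancel₀ hPne key.symm


lemma fin_strictMono_le {n : ℕ} {f : Fin n → ℕ} (hf : StrictMono f) (i : Fin n) :
    (i : ℕ) ≤ f i := by
  induction' h : (i : ℕ) with k ih generalizing i
  · exact Nat.zero_le _
  · have hk : k < n := by omega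
    have h1 : (⟨k, hk⟩ : Fin n) < i := by simp [Fin.lt_iff_val_lt_val, h]
    have := ih ⟨k, hk⟩ rfl
    have := hf h1
    omega

section Master

lemma master (t n : ℕ) (ht : 2 ≤ t) (hn : 1 ≤ n) (ω : ℂ) (hω : IsPrimitiveRoot ω t)
    (lam : Fin (t * n) → ℕ)
    (hanti : ∀ j k : Fin (t * n), j ≤ k → lam k ≤ lam j)
    (hcore : ∀ q < t, ncount t (t * n) lam q = n)
    (x : Fin n → ℂ) :
    Matrix.det (Matrix.of fun r j : Fin (t * n) =>
        (ω ^ (((finProdFinEquiv.symm r).1 : ℕ)) * x (finProdFinEquiv.symm r).2)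
          ^ betaSet (t * n) lam j)
      = (-1 : ℂ) ^ invCount t (t * n) lam
        * Matrix.det (Matrix.of fun p q : Fin t => ω ^ ((p : ℕ) * (q : ℕ))) ^ n
        * ∏ q : Fin t, ((∏ i, x i ^ (q : ℕ))
            * Matrix.det (Matrix.of fun i j : Fin n =>
                (x i ^ t) ^ (betaSet n (fun j' => quotPart t (t * n) lam (q : ℕ) (j' : ℕ)) j))) := by
  classical
  have htpos : 0 < t := by omega
  set β : Fin (t * n) → ℕ := betaSet (t * n) lam with hβ
  have hβanti : StrictAnti β := by
    intro j k hjk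
    have h1 := hanti j k hjk.le
    have h2 : (j : ℕ) < (k : ℕ) := hjk
    simp only [hβ, betaSet]
    have hk1 : (k : ℕ) ≤ t * n - 1 := Nat.le_sub_one_of_lt k.isLt
    have hj1 : (j : ℕ) < t * n - 1 := lt_of_lt_of_le h2 hk1
    have hsub : t * n - 1 - (k : ℕ) < t * n - 1 - (j : ℕ) := Nat.sub_lt_sub_left hj1 h2
    exact Nat.add_lt_add_of_le_of_lt h1 hsub
  set S : Fin t → Finset (Fin (t * n)) :=
    fun q => Finset.univ.filter (fun j => β j % t = (q : ℕ)) with hS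
  have hScard : ∀ q : Fin t, (S q).card = n := by
    intro q
    have := hcore q q.isLt
    simpa [ncount, hS, hβ] using this
  set g : Fin t → Fin n → Fin (t * n) :=
    fun q j => (S q).orderEmbOfFin (hScard q) j with hg
  have hgmem : ∀ q j, g q j ∈ S q := fun q j => (S q).orderEmbOfFin_mem (hScard q) j
  have hgmod : ∀ q j, β (g q j) % t = (q : ℕ) := by
    intro q j
    have := hgmem q j
    simp only [hS, Finset.mem_filter] at this
    exact this.2
  have hgmono : ∀ q, StrictMono (g q) := fun q => ((S q).orderEmbOfFin (hScard q)).strictMono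
  have hβganti : ∀ q, StrictAnti (fun j => β (g q j)) :=
    fun q j k hjk => hβanti (hgmono q hjk)
  -- the equiv
  have hg'inj : Function.Injective (fun p : Fin t × Fin n => g p.1 p.2) := by
    rintro ⟨q, a⟩ ⟨q', a'⟩ h
    simp only at h
    have hq : (q : ℕ) = (q' : ℕ) := by rw [← hgmod q a, ← hgmod q' a', h]
    have hq' : q = q' := Fin.ext hq
    subst hq'
    have : a = a' := ((S q).orderEmbOfFin (hScard q)).injective h
    simp [this]
  have hg'bij : Function.Bijective (fun p : Fin t × Fin n => g p.1 p.2) := by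
    rw [Fintype.bijective_iff_injective_and_card]
    exact ⟨hg'inj, by simp⟩
  set E : (Fin t × Fin n) ≃ Fin (t * n) := Equiv.ofBijective _ hg'bij with hE
  have hEapp : ∀ q a, E (q, a) = g q a := fun q a => rfl
  -- quotients
  set M : Fin t → Fin n → ℕ := fun q j => β (g q j) / t with hM
  have hβgM : ∀ q j, β (g q j) = t * M q j + (q : ℕ) := by
    intro q j
    have h1 := Nat.div_add_mod (β (g q j)) t
    rw [hgmod] at h1
    simp only [hM]
    omega
  have hMsub : ∀ q j, (β (g q j) - (q : ℕ)) / t = M q j := by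
    intro q j
    have := hβgM q j
    have h2 : β (g q j) - (q : ℕ) = t * M q j := by omega
    rw [h2, Nat.mul_div_cancel_left _ htpos]
  have hManti : ∀ q, StrictAnti (fun j => M q j) := by
    intro q j k hjk
    have := hβganti q hjk
    simp only at this ⊢
    rw [hβgM, hβgM] at this
    have := Nat.lt_of_add_lt_add_right this
    exact Nat.lt_of_mul_lt_mul_left this
  have hMrev : ∀ q (j : Fin n), (n - 1 - (j : ℕ)) ≤ M q j := by
    intro q j
    have hmono : StrictMono (fun k : Fin n => M q (Fin.rev k)) :=
      fun a b hab => hManti q (Fin.rev_lt_rev.mpr hab)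
    have := fin_strictMono_le hmono (Fin.rev j)
    simp only [Fin.rev_rev] at this
    have hval : ((Fin.rev j : Fin n) : ℕ) = n - ((j : ℕ) + 1) := Fin.val_rev j
    omega
  -- identify qList entries with beta values of g
  have hqListe : ∀ (q : Fin t) (j : Fin n),
      (qList t (t * n) lam (q : ℕ)).getD (n - 1 - (j : ℕ)) 0 = β (g q j) := by
    intro q j
    have hTcard : ((S q).image β).card = n := by
      rw [Finset.card_image_of_injective _ hβanti.injective, hScard]
    have hqT : qList t (t * n) lam (q : ℕ) = ((S q).image β).sort (· ≤ ·) := by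
      simp only [qList, hS, hβ]
    have hlen : (((S q).image β).sort (· ≤ ·)).length = n := by
      rw [Finset.length_sort, hTcard]
    have hidx : n - 1 - (j : ℕ) < n := by have := j.isLt; omega
    have hgetD : (((S q).image β).sort (· ≤ ·)).getD (n - 1 - (j : ℕ)) 0
        = ((S q).image β).orderEmbOfFin hTcard ⟨n - 1 - (j : ℕ), hidx⟩ := by
      rw [List.getD_eq_getElem _ _ (by rw [hlen]; exact hidx)]
      rfl
    have hF : (fun k : Fin n => β (g q (Fin.rev k)))
        = ⇑(((S q).image β).orderEmbOfFin hTcard) := by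
      apply Finset.orderEmbOfFin_unique
      · intro k; exact Finset.mem_image_of_mem β (hgmem q _)
      · intro a b hab
        exact hβganti q (Fin.rev_lt_rev.mpr hab)
    have hrevj : (⟨n - 1 - (j : ℕ), hidx⟩ : Fin n) = Fin.rev j := by
      apply Fin.ext
      have := Fin.val_rev j
      have := j.isLt
      simp only [this]
      omega
    rw [hqT, hgetD, hrevj, ← congrFun hF (Fin.rev j)]
    simp [Fin.rev_rev]
  have hquot : ∀ (q : Fin t) (j : Fin n),
      betaSet n (fun j' => quotPart t (t * n) lam (q : ℕ) (j' : ℕ)) j = M q j := by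
    intro q j
    have hnc : ncount t (t * n) lam (q : ℕ) = n := hcore q q.isLt
    have h1 := hqListe q j
    have h2 := hMsub q j
    have h3 := hMrev q j
    simp only [betaSet, quotPart, hnc, h1, h2]
    omega
  -- matrices
  set y : Fin (t * n) → ℂ :=
    fun r => ω ^ (((finProdFinEquiv.symm r).1 : ℕ)) * x (finProdFinEquiv.symm r).2 with hy
  set A : Matrix (Fin (t * n)) (Fin (t * n)) ℂ := Matrix.of fun r j => y r ^ β j with hA
  set W : Matrix (Fin t) (Fin t) ℂ := Matrix.of fun p q : Fin t => ω ^ ((p : ℕ) * (q : ℕ)) with hW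
  set Bf : Fin t → Matrix (Fin n) (Fin n) ℂ :=
    fun q => Matrix.of (fun i j => x i ^ (q : ℕ) * (x i ^ t) ^ (M q j)) with hBf
  set cp : Equiv.Perm (Fin (t * n)) := finProdFinEquiv.symm.trans E with hcp
  set P : Matrix (Fin t × Fin n) (Fin t × Fin n) ℂ :=
    A.submatrix (⇑finProdFinEquiv) (fun p : Fin t × Fin n => g p.1 p.2) with hP
  have hslice : P = (A.submatrix id ⇑cp).submatrix (⇑finProdFinEquiv) (⇑finProdFinEquiv) := by
    ext p q
    simp only [hP, Matrix.submatrix_apply, hcp, Equiv.trans_apply, Equiv.symm_apply_apply, id]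
    rfl
  have hdetP : Matrix.det P = (Equiv.Perm.sign cp : ℂ) * Matrix.det A := by
    rw [hslice, Matrix.det_submatrix_equiv_self finProdFinEquiv, Matrix.det_permute']
  have hsign2 : (Equiv.Perm.sign cp : ℂ) * (Equiv.Perm.sign cp : ℂ) = 1 := by
    rcases Int.units_eq_one_or (Equiv.Perm.sign cp) with h | h <;> rw [h] <;> norm_num
  have hdetA : Matrix.det A = (Equiv.Perm.sign cp : ℂ) * Matrix.det P := by
    rw [hdetP, ← mul_assoc, hsign2, one_mul]
  -- sign computation
  set τ : Equiv.Perm (Fin (t * n)) := E.symm.trans finProdFinEquiv with hτ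
  have hcpτ : Equiv.Perm.sign cp = Equiv.Perm.sign τ := by
    have : τ = cp.symm := by
      apply Equiv.ext; intro r; rfl
    rw [this, Equiv.Perm.sign_symm]
  have key : ∀ j k : Fin (t * n), j < k → (τ k < τ j ↔ β k % t < β j % t) := by
    intro j k hjk
    have hj' : g (E.symm j).1 (E.symm j).2 = j := E.apply_symm_apply j
    have hk' : g (E.symm k).1 (E.symm k).2 = k := E.apply_symm_apply k
    have hβj : β j % t = ((E.symm j).1 : ℕ) := by
      have h0 := hgmod (E.symm j).1 (E.symm j).2
      rw [hj'] at h0; exact h0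
    have hβk : β k % t = ((E.symm k).1 : ℕ) := by
      have h0 := hgmod (E.symm k).1 (E.symm k).2
      rw [hk'] at h0; exact h0
    have hτj : ((τ j : Fin (t * n)) : ℕ) = ((E.symm j).2 : ℕ) + n * ((E.symm j).1 : ℕ) := rfl
    have hτk : ((τ k : Fin (t * n)) : ℕ) = ((E.symm k).2 : ℕ) + n * ((E.symm k).1 : ℕ) := rfl
    rw [hβj, hβk, Fin.lt_iff_val_lt_val, hτj, hτk]
    have hai : ((E.symm j).2 : ℕ) < n := (E.symm j).2.isLt
    have hbi : ((E.symm k).2 : ℕ) < n := (E.symm k).2.isLt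
    rcases Nat.lt_trichotomy ((E.symm k).1 : ℕ) ((E.symm j).1 : ℕ) with h1 | h1 | h1
    · have h2 : n * (((E.symm k).1 : ℕ) + 1) ≤ n * ((E.symm j).1 : ℕ) :=
        Nat.mul_le_mul_left _ h1
      have h3 : n * (((E.symm k).1 : ℕ) + 1) = n * ((E.symm k).1 : ℕ) + n := by ring
      constructor
      · intro _; exact h1
      · intro _; omega
    · -- same residue: then (E.symm j).2 < (E.symm k).2
      have hq : (E.symm k).1 = (E.symm j).1 := Fin.ext h1
      have h4 : (E.symm j).2 < (E.symm k).2 := by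
        apply (hgmono (E.symm j).1).lt_iff_lt.mp
        rw [hj']
        rw [← hq, hk']
        exact hjk
      have h5 : ((E.symm j).2 : ℕ) < ((E.symm k).2 : ℕ) := h4
      have h6 : n * (((E.symm k).1 : ℕ)) = n * (((E.symm j).1 : ℕ)) := by rw [hq]
      constructor
      · intro h; omega
      · intro h; omega
    · have h2 : n * (((E.symm j).1 : ℕ) + 1) ≤ n * ((E.symm k).1 : ℕ) :=
        Nat.mul_le_mul_left _ h1
      have h3 : n * (((E.symm j).1 : ℕ) + 1) = n * ((E.symm j).1 : ℕ) + n := by ring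
      constructor
      · intro h; omega
      · intro h; omega
  have hτinv : (Finset.univ.filter fun p : Fin (t * n) × Fin (t * n) =>
        p.1 < p.2 ∧ τ p.2 < τ p.1).card = invCount t (t * n) lam := by
    unfold invCount
    apply congrArg Finset.card
    apply Finset.filter_congr
    intro p _
    constructor
    · rintro ⟨h1, h2⟩; exact ⟨h1, (key p.1 p.2 h1).mp h2⟩
    · rintro ⟨h1, h2⟩; exact ⟨h1, (key p.1 p.2 h1).mpr h2⟩
  have hsignτ : ((Equiv.Perm.sign τ : ℤˣ) : ℤ) = (-1) ^ invCount t (t * n) lam := by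
    rw [sign_eq_inversions τ, hτinv]
  -- entries of P
  have hPentry : ∀ (p : Fin t × Fin n) (qj : Fin t × Fin n),
      P p qj = W p.1 qj.1 * (x p.2 ^ ((qj.1 : ℕ)) * (x p.2 ^ t) ^ (M qj.1 qj.2)) := by
    rintro ⟨p, i⟩ ⟨q, j⟩
    simp only [hP, Matrix.submatrix_apply, hA, Matrix.of_apply, hy, Equiv.symm_apply_apply]
    rw [hβgM q j]
    have hω1 : ω ^ t = 1 := hω.pow_eq_one
    rw [mul_pow, ← pow_mul]
    have e1 : (p : ℕ) * (t * M q j + (q : ℕ)) = t * ((p : ℕ) * M q j) + (p : ℕ) * (q : ℕ) := by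
      ring
    rw [e1, pow_add, pow_mul, hω1, one_pow, one_mul, pow_add, pow_mul]
    simp only [hW, Matrix.of_apply]
    ring
  -- factorization of P
  have hfact : P = (Matrix.kroneckerMap (· * ·) W (1 : Matrix (Fin n) (Fin n) ℂ)) *
      ((Matrix.blockDiagonal Bf).submatrix (⇑(Equiv.prodComm (Fin t) (Fin n)))
        (⇑(Equiv.prodComm (Fin t) (Fin n)))) := by
    ext ⟨p, i⟩ ⟨q, j⟩
    rw [hPentry (p, i) (q, j), Matrix.mul_apply, Fintype.sum_prod_type]
    simp only [Matrix.kroneckerMap_apply, Matrix.one_apply, Matrix.submatrix_apply,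
      Equiv.prodComm_apply, Prod.swap_prod_mk, Matrix.blockDiagonal_apply, mul_ite, mul_zero,
      mul_one, ite_mul, zero_mul]
    rw [Finset.sum_comm]
    simp [Finset.sum_ite_eq', hBf]
  have hdetPfact : Matrix.det P
      = Matrix.det W ^ n * ∏ q : Fin t, Matrix.det (Bf q) := by
    rw [hfact, Matrix.det_mul, Matrix.det_kronecker, Matrix.det_one, one_pow, mul_one,
      Matrix.det_submatrix_equiv_self, Matrix.det_blockDiagonal]
    simp
  have hdetBf : ∀ q : Fin t, Matrix.det (Bf q)
      = (∏ i, x i ^ (q : ℕ)) * Matrix.det (Matrix.of fun i j : Fin n =>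
          (x i ^ t) ^ (betaSet n (fun j' => quotPart t (t * n) lam (q : ℕ) (j' : ℕ)) j)) := by
    intro q
    have hBq : Bf q = Matrix.of (fun i j : Fin n =>
        (fun i => x i ^ (q : ℕ)) i * (Matrix.of fun i j : Fin n =>
          (x i ^ t) ^ (betaSet n (fun j' => quotPart t (t * n) lam (q : ℕ) (j' : ℕ)) j)) i j) := by
      ext i j
      simp [hBf, hquot]
    rw [hBq, Matrix.det_mul_column]
  have hsignC : (((Equiv.Perm.sign cp : ℤˣ) : ℤ) : ℂ)
      = (-1 : ℂ) ^ invCount t (t * n) lam := by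
    rw [hcpτ]
    have h2 : (((Equiv.Perm.sign τ : ℤˣ) : ℤ) : ℂ)
        = (((-1 : ℤ) ^ invCount t (t * n) lam : ℤ) : ℂ) := by
      rw [hsignτ]
    push_cast at h2
    exact h2
  show Matrix.det A = _
  calc Matrix.det A
      = (((Equiv.Perm.sign cp : ℤˣ) : ℤ) : ℂ)
        * (Matrix.det W ^ n * ∏ q : Fin t, Matrix.det (Bf q)) := by
        rw [hdetA, hdetPfact]
    _ = (-1 : ℂ) ^ invCount t (t * n) lam * Matrix.det W ^ n
        * ∏ q : Fin t, ((∏ i, x i ^ (q : ℕ))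
            * Matrix.det (Matrix.of fun i j : Fin n =>
                (x i ^ t) ^ (betaSet n (fun j' => quotPart t (t * n) lam (q : ℕ) (j' : ℕ)) j))) := by
        rw [hsignC, Finset.prod_congr rfl fun q _ => hdetBf q, mul_assoc]

end Master

section ZeroLam

variable {t n : ℕ}

-- helper: decomposition facts
lemma decompA (ht : 0 < t) (hn : 0 < n) {a s : ℕ} (ha : a < t) (hs : s < n) :
    a + t * s ≤ t * n - 1 ∧ (a + t * s) % t = a ∧ (a + t * s) / t = s := by
  obtain ⟨n', rfl⟩ : ∃ n', n = n' + 1 := ⟨n - 1, by omega⟩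
  have h1 : t * s ≤ t * n' := Nat.mul_le_mul_left t (by omega)
  have h2 : t * (n' + 1) = t * n' + t := by ring
  refine ⟨by omega, ?_, ?_⟩
  · rw [Nat.add_mul_mod_self_left, Nat.mod_eq_of_lt ha]
  · rw [Nat.add_mul_div_left _ _ ht, Nat.div_eq_of_lt ha, Nat.zero_add]

lemma decompB (ht : 0 < t) (hn : 0 < n) {X : ℕ} (hX : X ≤ t * n - 1) :
    X % t < t ∧ X / t < n ∧ t * (X / t) + X % t = X := by
  have h0 : 0 < t * n := Nat.mul_pos ht hn
  refine ⟨Nat.mod_lt _ ht, ?_, Nat.div_add_mod X t⟩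
  rw [Nat.div_lt_iff_lt_mul ht]
  have : n * t = t * n := Nat.mul_comm n t
  omega

lemma betaSet_zero (j : Fin (t * n)) : betaSet (t * n) (fun _ => 0) j = t * n - 1 - (j : ℕ) := by
  simp [betaSet]

lemma ncount_zero (ht : 0 < t) (hn : 0 < n) : ∀ q < t, ncount t (t * n) (fun _ => 0) q = n := by
  intro q hq
  have h0 : 0 < t * n := Nat.mul_pos ht hn
  unfold ncount
  have key : (Finset.univ.filter fun j : Fin (t*n) => betaSet (t * n) (fun _ => 0) j % t = q).card
      = (Finset.univ : Finset (Fin n)).card := by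
    refine Finset.card_nbij'
      (fun j => (⟨(t * n - 1 - (j : ℕ)) / t, (decompB ht hn (by omega)).2.1⟩ : Fin n))
      (fun i => (⟨t * n - 1 - (q + t * (i : ℕ)), by omega⟩ : Fin (t * n))) ?_ ?_ ?_ ?_
    · intro a ha; exact Finset.mem_univ _
    · intro i _
      simp only [Finset.mem_coe, Finset.mem_filter, Finset.mem_univ, true_and, betaSet_zero]
      obtain ⟨hle, hmod, hdiv⟩ := decompA ht hn hq i.isLt
      have : t * n - 1 - (t * n - 1 - (q + t * (i : ℕ))) = q + t * (i : ℕ) := by omega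
      rw [this, hmod]
    · intro j hj
      simp only [Finset.mem_coe, Finset.mem_filter, Finset.mem_univ, true_and, betaSet_zero] at hj
      apply Fin.ext
      obtain ⟨hmlt, hdlt, hdm⟩ := decompB ht hn (show t * n - 1 - (j:ℕ) ≤ t * n - 1 by omega)
      rw [hj] at hdm
      have hjle : (j : ℕ) ≤ t * n - 1 := by have := j.isLt; omega
      simp only []
      omega
    · intro i _
      apply Fin.ext
      obtain ⟨hle, hmod, hdiv⟩ := decompA ht hn hq i.isLt
      have : t * n - 1 - (t * n - 1 - (q + t * (i : ℕ))) = q + t * (i : ℕ) := by omega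
      simp only [this, hdiv]

  simpa using key

lemma quotPart_zero (ht : 0 < t) (hn : 0 < n) {q : ℕ} (hq : q < t) (j : ℕ) :
    quotPart t (t * n) (fun _ => 0) q j = 0 := by
  have h0 : 0 < t * n := Nat.mul_pos ht hn
  have hnc : ncount t (t * n) (fun _ => 0) q = n := ncount_zero ht hn q hq
  unfold quotPart
  rw [hnc]
  -- identify the sorted list entries
  set S : Finset (Fin (t * n)) :=
    Finset.univ.filter (fun j => betaSet (t * n) (fun _ => 0) j % t = q) with hS
  have hScard : S.card = n := hnc
  have hTcard : (S.image (betaSet (t * n) (fun _ => 0))).card = n := by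
    rw [Finset.card_image_of_injOn, hScard]
    intro a _ b _ hab
    rw [betaSet_zero, betaSet_zero] at hab
    have ha := a.isLt; have hb := b.isLt
    apply Fin.ext; omega
  have hemb : (fun k : Fin n => q + t * (k : ℕ))
      = ⇑((S.image (betaSet (t * n) (fun _ => 0))).orderEmbOfFin hTcard) := by
    apply Finset.orderEmbOfFin_unique
    · intro k
      apply Finset.mem_image.mpr
      obtain ⟨hle, hmod, hdiv⟩ := decompA ht hn hq k.isLt
      refine ⟨⟨t * n - 1 - (q + t * (k : ℕ)), by omega⟩, ?_, ?_⟩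
      · simp only [hS, Finset.mem_filter, Finset.mem_univ, true_and, betaSet_zero]
        have : t * n - 1 - (t * n - 1 - (q + t * (k : ℕ))) = q + t * (k : ℕ) := by omega
        rw [this, hmod]
      · rw [betaSet_zero]
        simp only []
        omega
    · intro a b hab
      show q + t * (a : ℕ) < q + t * (b : ℕ)
      have h1 : t * (a : ℕ) < t * (b : ℕ) :=
        mul_lt_mul_of_pos_left (show (a:ℕ) < (b:ℕ) from hab) ht
      omega
  have hidx : n - 1 - j < n := by omega
  have hlen : ((S.image (betaSet (t * n) (fun _ => 0))).sort (· ≤ ·)).length = n := by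
    rw [Finset.length_sort, hTcard]
  have hgetD : (qList t (t * n) (fun _ => 0) q).getD (n - 1 - j) 0 = q + t * (n - 1 - j) := by
    have h1 : qList t (t * n) (fun _ => 0) q
        = (S.image (betaSet (t * n) (fun _ => 0))).sort (· ≤ ·) := by
      simp only [qList, hS]
    rw [h1, List.getD_eq_getElem _ _ (by rw [hlen]; exact hidx)]
    have h2 := congrFun hemb ⟨n - 1 - j, hidx⟩
    simp only at h2
    rw [Finset.orderEmbOfFin_apply] at h2
    exact h2.symm
  rw [hgetD]
  have : q + t * (n - 1 - j) - q = t * (n - 1 - j) := by omega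
  rw [this, Nat.mul_div_cancel_left _ ht, Nat.sub_self]

end ZeroLam

section Counting

lemma card_pairs_eq' {N : ℕ} (c : Fin N → Fin N → Prop)
    [DecidablePred fun p : Fin N × Fin N => c p.1 p.2] [∀ i, DecidablePred (c i)] :
    (Finset.univ.filter fun p : Fin N × Fin N => p.1 < p.2 ∧ c p.1 p.2).card
      = ∑ i : Fin N, ((Finset.Ioi i).filter (c i)).card := by
  classical
  rw [← Finset.card_sigma]
  apply Finset.card_nbij (fun p => ⟨p.1, p.2⟩)
  · intro p hp; simp_all [Finset.mem_sigma]
  · intro p hp q hq hpq; cases p; cases q; simpa [Prod.ext_iff] using hpq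
  · intro p hp; exact ⟨(p.1, p.2), by simp_all [Finset.mem_sigma], rfl⟩

lemma card_lt_pairs (k : ℕ) :
    (Finset.univ.filter fun p : Fin k × Fin k => p.1 < p.2).card = k * (k - 1) / 2 := by
  classical
  have h1 := card_pairs_eq' (fun _ _ : Fin k => True)
  simp only [and_true, Finset.filter_true] at h1
  rw [h1]
  simp only [Fin.card_Ioi]
  rw [Fin.sum_univ_eq_sum_range (fun i => k - 1 - i) k,
    Finset.sum_range_reflect (fun i => i) k, Finset.sum_range_id]

lemma card_le_pairs (k : ℕ) :
    (Finset.univ.filter fun p : Fin k × Fin k => p.1 ≤ p.2).card = k * (k + 1) / 2 := by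
  classical
  have h1 : (Finset.univ.filter fun p : Fin k × Fin k => p.1 ≤ p.2).card
      = (Finset.univ.sigma fun i : Fin k => Finset.Ici i).card := by
    apply Finset.card_nbij (fun p => ⟨p.1, p.2⟩)
    · intro p hp; simp_all [Finset.mem_sigma]
    · intro p hp q hq hpq; cases p; cases q; simpa [Prod.ext_iff] using hpq
    · intro p hp; exact ⟨(p.1, p.2), by simp_all [Finset.mem_sigma], rfl⟩
  rw [h1, Finset.card_sigma]
  simp only [Fin.card_Ici]
  rw [Fin.sum_univ_eq_sum_range (fun i => k - i) k]
  have h2 : ∀ i ∈ Finset.range k, k - i = (k - 1 - i) + 1 := by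
    intro i hi; simp only [Finset.mem_range] at hi; omega
  rw [Finset.sum_congr rfl h2, Finset.sum_add_distrib,
    Finset.sum_range_reflect (fun i => i) k, Finset.sum_range_id]
  simp only [Finset.sum_const, Finset.card_range, smul_eq_mul, mul_one]
  cases k with
  | zero => simp
  | succ m =>
    have h4 : (m + 1) * (m + 1 + 1) = (m + 1) * m + 2 * (m + 1) := by ring
    simp only [Nat.add_sub_cancel]
    omega

lemma invCount_zero {t n : ℕ} (ht : 0 < t) (hn : 0 < n) :
    invCount t (t * n) (fun _ => 0) = t * (t - 1) / 2 * (n * (n + 1) / 2) := by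
  have h0 : 0 < t * n := Nat.mul_pos ht hn
  unfold invCount
  have key : (Finset.univ.filter fun jk : Fin (t*n) × Fin (t*n) =>
        jk.1 < jk.2 ∧ betaSet (t*n) (fun _ => 0) jk.2 % t < betaSet (t*n) (fun _ => 0) jk.1 % t).card
      = ((Finset.univ.filter fun ab : Fin t × Fin t => ab.1 < ab.2) ×ˢ
         (Finset.univ.filter fun ss : Fin n × Fin n => ss.1 ≤ ss.2)).card := by
    refine Finset.card_nbij'
      (fun p => ((⟨(t*n-1-(p.2:ℕ)) % t, Nat.mod_lt _ ht⟩, ⟨(t*n-1-(p.1:ℕ)) % t, Nat.mod_lt _ ht⟩),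
                 (⟨(t*n-1-(p.2:ℕ)) / t, (decompB ht hn (by omega)).2.1⟩,
                  ⟨(t*n-1-(p.1:ℕ)) / t, (decompB ht hn (by omega)).2.1⟩)))
      (fun w => (⟨t*n-1-((w.1.2:ℕ) + t*(w.2.2:ℕ)), by omega⟩,
                 ⟨t*n-1-((w.1.1:ℕ) + t*(w.2.1:ℕ)), by omega⟩)) ?_ ?_ ?_ ?_
    · intro p hp
      simp only [Finset.mem_coe, Finset.mem_filter, Finset.mem_univ, true_and, betaSet_zero] at hp
      obtain ⟨hlt, hcond⟩ := hp
      have hlt' : (p.1:ℕ) < (p.2:ℕ) := hlt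
      have hj2 : (p.2:ℕ) < t*n := p.2.isLt
      obtain ⟨hbu, hdu, hmu⟩ := decompB ht hn (show t*n-1-(p.1:ℕ) ≤ t*n-1 by omega)
      obtain ⟨hbv, hdv, hmv⟩ := decompB ht hn (show t*n-1-(p.2:ℕ) ≤ t*n-1 by omega)
      simp only [Finset.mem_coe, Finset.mem_product, Finset.mem_filter, Finset.mem_univ, true_and]
      constructor
      · exact hcond
      · show (t*n-1-(p.2:ℕ)) / t ≤ (t*n-1-(p.1:ℕ)) / t
        by_contra hss
        push_neg at hss
        have h5 : t * ((t*n-1-(p.1:ℕ))/t + 1) ≤ t * ((t*n-1-(p.2:ℕ))/t) :=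
          Nat.mul_le_mul_left t (by omega)
        have h6 : t * ((t*n-1-(p.1:ℕ))/t + 1) = t * ((t*n-1-(p.1:ℕ))/t) + t := by ring
        omega
    · intro w hw
      simp only [Finset.mem_coe, Finset.mem_product, Finset.mem_filter, Finset.mem_univ, true_and] at hw
      obtain ⟨hab, hss⟩ := hw
      have hab' : ((w.1.1 : Fin t) : ℕ) < ((w.1.2 : Fin t) : ℕ) := hab
      have hss' : ((w.2.1 : Fin n) : ℕ) ≤ ((w.2.2 : Fin n) : ℕ) := hss
      obtain ⟨hleA, hmodA, hdivA⟩ := decompA ht hn (w.1.1).isLt (w.2.1).isLt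
      obtain ⟨hleB, hmodB, hdivB⟩ := decompA ht hn (w.1.2).isLt (w.2.2).isLt
      have hmul : t * ((w.2.1:ℕ)) ≤ t * ((w.2.2:ℕ)) := Nat.mul_le_mul_left t hss'
      simp only [Finset.mem_coe, Finset.mem_filter, Finset.mem_univ, true_and, betaSet_zero]
      constructor
      · show (⟨t*n-1-((w.1.2:ℕ) + t*(w.2.2:ℕ)), by omega⟩ : Fin (t*n))
            < ⟨t*n-1-((w.1.1:ℕ) + t*(w.2.1:ℕ)), by omega⟩
        rw [Fin.mk_lt_mk]
        omega
      · have e1 : t*n-1-(t*n-1-((w.1.1:ℕ) + t*(w.2.1:ℕ))) = (w.1.1:ℕ) + t*(w.2.1:ℕ) := by omega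
        have e2 : t*n-1-(t*n-1-((w.1.2:ℕ) + t*(w.2.2:ℕ))) = (w.1.2:ℕ) + t*(w.2.2:ℕ) := by omega
        show (t*n-1-((⟨t*n-1-((w.1.1:ℕ) + t*(w.2.1:ℕ)), by omega⟩ : Fin (t*n)):ℕ)) % t
            < (t*n-1-((⟨t*n-1-((w.1.2:ℕ) + t*(w.2.2:ℕ)), by omega⟩ : Fin (t*n)):ℕ)) % t
        simp only [e1, e2, hmodA, hmodB]
        exact hab'
    · intro p hp
      simp only [Finset.mem_coe, Finset.mem_filter, Finset.mem_univ, true_and, betaSet_zero] at hp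
      obtain ⟨hlt, hcond⟩ := hp
      have hlt' : (p.1:ℕ) < (p.2:ℕ) := hlt
      have hj2 : (p.2:ℕ) < t*n := p.2.isLt
      obtain ⟨hbu, hdu, hmu⟩ := decompB ht hn (show t*n-1-(p.1:ℕ) ≤ t*n-1 by omega)
      obtain ⟨hbv, hdv, hmv⟩ := decompB ht hn (show t*n-1-(p.2:ℕ) ≤ t*n-1 by omega)
      have : p = (p.1, p.2) := rfl
      rw [this]
      apply Prod.ext <;> apply Fin.ext <;> simp only [] <;> omega
    · intro w hw
      simp only [Finset.mem_coe, Finset.mem_product, Finset.mem_filter, Finset.mem_univ, true_and] at hw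
      obtain ⟨hab, hss⟩ := hw
      obtain ⟨hleA, hmodA, hdivA⟩ := decompA ht hn (w.1.1).isLt (w.2.1).isLt
      obtain ⟨hleB, hmodB, hdivB⟩ := decompA ht hn (w.1.2).isLt (w.2.2).isLt
      have e1 : t*n-1-(t*n-1-((w.1.1:ℕ) + t*(w.2.1:ℕ))) = (w.1.1:ℕ) + t*(w.2.1:ℕ) := by omega
      have e2 : t*n-1-(t*n-1-((w.1.2:ℕ) + t*(w.2.2:ℕ))) = (w.1.2:ℕ) + t*(w.2.2:ℕ) := by omega
      have : w = ((w.1.1, w.1.2), (w.2.1, w.2.2)) := rfl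
      rw [this]
      apply Prod.ext <;> apply Prod.ext <;> apply Fin.ext <;>
        simp only [e1, e2, hmodA, hmodB, hdivA, hdivB]
  rw [key, Finset.card_product, card_lt_pairs, card_le_pairs]

end Counting

end Helpers

/-- Prasad's factorization: if `n_q(λ, tn) = n` for all `q` (empty `t`-core), then
`s_λ(X, ωX, …, ω^{t-1}X) = (-1)^{(t(t-1)/2)(n(n+1)/2)} sgn(σ_λ) ∏_q s_{λ^{(q)}}(X^t)`. -/
theorem schur_twisted_factorization
    (t n : ℕ) (ht : 2 ≤ t) (hn : 1 ≤ n)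
    (ω : ℂ) (hω : IsPrimitiveRoot ω t)
    (lam : Fin (t * n) → ℕ)
    (hanti : ∀ j k : Fin (t * n), j ≤ k → lam k ≤ lam j)
    (hcore : ∀ q < t, ncount t (t * n) lam q = n)
    (x : Fin n → ℂ) (hx0 : ∀ i, x i ≠ 0)
    (hxdist : ∀ i j : Fin n, x i ^ t = x j ^ t → i = j) :
    schur (t * n) lam
        (fun r => ω ^ (((finProdFinEquiv.symm r).1 : ℕ)) * x (finProdFinEquiv.symm r).2)
      = (-1 : ℂ) ^ (t * (t - 1) / 2 * (n * (n + 1) / 2))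
        * (-1 : ℂ) ^ invCount t (t * n) lam
        * ∏ q : Fin t,
            schur n (fun j => quotPart t (t * n) lam (q : ℕ) (j : ℕ))
              (fun i => x i ^ t) := by
  classical
  have htpos : 0 < t := by omega
  have hnpos : 0 < n := hn
  have hnum := master t n ht hn ω hω lam hanti hcore x
  have hden0 := master t n ht hn ω hω (fun _ => 0) (fun _ _ _ => le_refl 0)
    (ncount_zero htpos hnpos) x
  -- notation
  set y : Fin (t * n) → ℂ :=
    fun r => ω ^ (((finProdFinEquiv.symm r).1 : ℕ)) * x (finProdFinEquiv.symm r).2 with hy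
  set K : ℂ := Matrix.det (Matrix.of fun p q : Fin t => ω ^ ((p : ℕ) * (q : ℕ))) with hK
  set Nq : Fin t → ℂ := fun q => Matrix.det (Matrix.of fun i j : Fin n =>
    (x i ^ t) ^ (betaSet n (fun j' => quotPart t (t * n) lam (q : ℕ) (j' : ℕ)) j)) with hNq
  set D : ℂ := Matrix.det (Matrix.of fun i j : Fin n => (x i ^ t) ^ (n - 1 - (j : ℕ))) with hD
  set C : ℂ := ∏ q : Fin t, ∏ i, x i ^ (q : ℕ) with hC
  -- rewrite the zero-lam quotient dets
  have hquot0 : ∀ q : Fin t, (Matrix.of fun i j : Fin n =>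
      (x i ^ t) ^ (betaSet n (fun j' => quotPart t (t * n) (fun _ => 0) (q : ℕ) (j' : ℕ)) j)) =
      (Matrix.of fun i j : Fin n => (x i ^ t) ^ (n - 1 - (j : ℕ))) := by
    intro q
    ext i j
    simp only [Matrix.of_apply]
    congr 1
    simp [betaSet, quotPart_zero htpos hnpos q.isLt]
  -- nonvanishing facts
  have hKne : K ≠ 0 := by
    have hWv : (Matrix.of fun p q : Fin t => ω ^ ((p : ℕ) * (q : ℕ)))
        = Matrix.vandermonde (fun p : Fin t => ω ^ (p : ℕ)) := by
      ext p q
      simp only [Matrix.of_apply, Matrix.vandermonde_apply, ← pow_mul]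
    rw [hK, hWv, Ne, Matrix.det_vandermonde_eq_zero_iff]
    rintro ⟨p, p', hpp, hne⟩
    exact hne (Fin.ext (hω.pow_inj p.isLt p'.isLt hpp))
  have hDne : D ≠ 0 := by
    have h1 : (Matrix.of fun i j : Fin n => (x i ^ t) ^ (n - 1 - (j : ℕ)))
        = (Matrix.vandermonde (fun i : Fin n => x i ^ t)).submatrix id ⇑(Fin.revPerm (n := n)) := by
      ext i j
      simp only [Matrix.of_apply, Matrix.submatrix_apply, Matrix.vandermonde_apply, id,
        Fin.revPerm_apply]
      congr 1
      rw [Fin.val_rev]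
      omega
    rw [hD, h1, Matrix.det_permute']
    apply mul_ne_zero
    · rcases Int.units_eq_one_or (Equiv.Perm.sign (Fin.revPerm (n := n))) with h | h <;>
        rw [h] <;> norm_num
    · rw [Ne, Matrix.det_vandermonde_eq_zero_iff]
      rintro ⟨i, i', hii, hne⟩
      exact hne (hxdist i i' hii)
  have hCne : C ≠ 0 := by
    rw [hC]
    apply Finset.prod_ne_zero_iff.mpr
    intro q _
    exact Finset.prod_ne_zero_iff.mpr fun i _ => pow_ne_zero _ (hx0 i)
  have hKnne : K ^ n ≠ 0 := pow_ne_zero _ hKne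
  have hDtne : D ^ t ≠ 0 := pow_ne_zero _ hDne
  -- unfold schur and rewrite
  rw [schur]
  have hdmat : (Matrix.of fun i j : Fin (t * n) => y i ^ (t * n - 1 - (j : ℕ)))
      = (Matrix.of fun r j : Fin (t * n) => y r ^ betaSet (t * n) (fun _ => 0) j) := by
    ext i j
    simp [betaSet]
  rw [hdmat]
  have hnum' : Matrix.det (Matrix.of fun r j : Fin (t * n) => y r ^ betaSet (t * n) lam j)
      = (-1 : ℂ) ^ invCount t (t * n) lam * K ^ n * (C * ∏ q : Fin t, Nq q) := by
    rw [hy]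
    rw [hnum]
    rw [Finset.prod_mul_distrib]
  have hden' : Matrix.det (Matrix.of fun r j : Fin (t * n) => y r ^ betaSet (t * n) (fun _ => 0) j)
      = (-1 : ℂ) ^ (t * (t - 1) / 2 * (n * (n + 1) / 2)) * K ^ n * (C * D ^ t) := by
    rw [hy]
    rw [hden0, invCount_zero htpos hnpos]
    rw [Finset.prod_congr rfl fun q (_ : q ∈ Finset.univ) => by rw [hquot0 q]]
    rw [Finset.prod_mul_distrib, Finset.prod_const, Finset.card_univ, Fintype.card_fin]
  rw [hnum', hden']
  have hschurq : ∀ q : Fin t,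
      schur n (fun j => quotPart t (t * n) lam (q : ℕ) (j : ℕ)) (fun i => x i ^ t)
        = Nq q / D := by
    intro q
    rw [schur, hNq, hD]
  rw [Finset.prod_congr rfl fun q (_ : q ∈ Finset.univ) => hschurq q,
    Finset.prod_div_distrib, Finset.prod_const, Finset.card_univ, Fintype.card_fin]
  have hsne : ((-1 : ℂ) ^ (t * (t - 1) / 2 * (n * (n + 1) / 2))) ≠ 0 := by
    apply pow_ne_zero; norm_num
  have hs2 : ((-1 : ℂ) ^ (t * (t - 1) / 2 * (n * (n + 1) / 2)))
      * ((-1 : ℂ) ^ (t * (t - 1) / 2 * (n * (n + 1) / 2))) = 1 := by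
    rw [← pow_add]
    exact Even.neg_one_pow ⟨_, rfl⟩
  field_simp
  ring_nf
  rw [mul_comm (t * (t - 1) / 2 * ((n + n ^ 2) / 2)) 2, pow_mul, neg_one_sq, one_pow, mul_one]
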